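/- Let α be an irrational number not equivalent to (1+√5)/2, whose continued fraction expansion contains for infinitely many n the pattern a_{n−2} = a_{n−1} = 1, aₙ = 3, a_{n+1} = a_{n+2} = a_{n+3} = a_{n+4} = a_{n+5} = 1. Then 𝔨(α) ≤ 4/((√21+1)/10 + (√21+943)/262) = 0.958087⁺; in particular 𝔨(α) < 164/(13√173). -/

import Mathlib

open Filter
set_option linter.unusedSectionVars false
set_option maxHeartbeats 1000000

/-- The tails `αₙ = [aₙ; aₙ₊₁, …]` of the continued fraction of `α`. -/
noncomputable def cfTail (α : ℝ) : ℕ → ℝ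
  | 0 => α
  | n + 1 => (Int.fract (cfTail α n))⁻¹

/-- The partial quotients `aₙ` of the continued fraction of `α`. -/
noncomputable def cfDigit (α : ℝ) (n : ℕ) : ℤ := ⌊cfTail α n⌋

/-- Value `[a; b, c, …]` of a finite continued fraction given by a list. -/
noncomputable def finCF : List ℤ → ℝ
  | [] => 0
  | a :: l => (a : ℝ) + (finCF l)⁻¹

/-- `α*ₙ = [0; aₙ, aₙ₋₁, …, a₁]`. -/
noncomputable def cfStar (α : ℝ) (n : ℕ) : ℝ :=
  (finCF (((List.range' 1 n).reverse).map (cfDigit α)))⁻¹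

/-- Numerators `pₙ` of the convergents of `α`. -/
noncomputable def cfNum (α : ℝ) : ℕ → ℤ
  | 0 => cfDigit α 0
  | 1 => cfDigit α 1 * cfDigit α 0 + 1
  | n + 2 => cfDigit α (n + 2) * cfNum α (n + 1) + cfNum α n

/-- Denominators `qₙ` of the convergents of `α`. -/
noncomputable def cfDen (α : ℝ) : ℕ → ℤ
  | 0 => 1
  | 1 => cfDigit α 1
  | n + 2 => cfDigit α (n + 2) * cfDen α (n + 1) + cfDen α n

/-- The irrationality measure function `ψ_α^[2]` for "second best" approximations. -/
noncomputable def psi2 (α : ℝ) (t : ℝ) : ℝ :=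
  sInf { x : ℝ | ∃ p q : ℤ, 1 ≤ q ∧ (q : ℝ) ≤ t ∧
    (∀ n : ℕ, (p, q) ≠ (cfNum α n, cfDen α n)) ∧ x = |(q : ℝ) * α - (p : ℝ)| }

/-- The Diophantine constant `𝔨(α) = liminf_{t → ∞} t · ψ_α^[2](t)`. -/
noncomputable def kConst (α : ℝ) : ℝ := liminf (fun t : ℝ => t * psi2 α t) atTop

/-- Two numbers are equivalent if the tails of their continued fraction expansions
coincide: `a_{n+k} = b_{m+k}` for all `k ≥ 1`, for some positive integers `m`, `n`. -/
def CFEquiv (α β : ℝ) : Prop :=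
  ∃ n m : ℕ, 0 < n ∧ 0 < m ∧ ∀ k : ℕ, 0 < k → cfDigit α (n + k) = cfDigit β (m + k)

/-- The spectrum `𝕃₂` of values of `𝔨`. -/
def L2 : Set ℝ := { l : ℝ | ∃ α : ℝ, Irrational α ∧ l = kConst α }

/-- `κ¹ₙ(α) = (1 + α*ₙ₋₁)(αₙ − 1)/(αₙ + α*ₙ₋₁)`. -/
noncomputable def kappa1 (α : ℝ) (n : ℕ) : ℝ :=
  (1 + cfStar α (n - 1)) * (cfTail α n - 1) / (cfTail α n + cfStar α (n - 1))

/-- `κ²ₙ(α) = (1 − α*ₙ)(αₙ₊₁ + 1)/(αₙ₊₁ + α*ₙ)`. -/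
noncomputable def kappa2 (α : ℝ) (n : ℕ) : ℝ :=
  (1 - cfStar α n) * (cfTail α (n + 1) + 1) / (cfTail α (n + 1) + cfStar α n)

/-- `κ⁴ₙ(α) = 4/(αₙ + α*ₙ₋₁)`. -/
noncomputable def kappa4 (α : ℝ) (n : ℕ) : ℝ :=
  4 / (cfTail α n + cfStar α (n - 1))

section CF
variable {α : ℝ} (hα : Irrational α)
include hα

lemma tail_irr : ∀ n, Irrational (cfTail α n) := by
  intro n
  induction n with
  | zero => exact hα
  | succ n ih =>
    show Irrational (Int.fract (cfTail α n))⁻¹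
    have : Irrational (Int.fract (cfTail α n)) := by
      unfold Int.fract
      exact ih.sub_intCast _
    exact this.inv

lemma fract_tail_pos (n : ℕ) : 0 < Int.fract (cfTail α n) := by
  rcases lt_or_eq_of_le (Int.fract_nonneg (cfTail α n)) with h | h
  · exact h
  · exfalso
    have hirr : Irrational (Int.fract (cfTail α n)) := by
      unfold Int.fract; exact (tail_irr hα n).sub_intCast _
    exact hirr.ne_int 0 (by exact_mod_cast h.symm)

lemma tail_gt_one (n : ℕ) : 1 < cfTail α (n + 1) := by
  show 1 < (Int.fract (cfTail α n))⁻¹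
  have h1 := fract_tail_pos hα n
  have h2 := Int.fract_lt_one (cfTail α n)
  rw [lt_inv_comm₀ one_pos h1]
  simpa using h2

lemma tail_pos (n : ℕ) : 0 < cfTail α (n + 1) :=
  lt_trans one_pos (tail_gt_one hα n)

lemma tail_rec (n : ℕ) : cfTail α n = (cfDigit α n : ℝ) + (cfTail α (n + 1))⁻¹ := by
  have : cfTail α (n + 1) = (Int.fract (cfTail α n))⁻¹ := rfl
  rw [this, inv_inv, cfDigit, Int.fract]
  ring

lemma digit_ge_one (n : ℕ) : 1 ≤ cfDigit α (n + 1) := by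
  have := tail_gt_one hα n
  have : (1 : ℤ) ≤ ⌊cfTail α (n + 1)⌋ := by
    rw [Int.le_floor]; push_cast; linarith
  exact this

lemma den_pos : ∀ n, 1 ≤ cfDen α n ∧ cfDen α n ≤ cfDen α (n + 1) := by
  intro n
  induction n with
  | zero =>
    have h0 : cfDen α 0 = 1 := rfl
    have h1 : cfDen α 1 = cfDigit α 1 := rfl
    rw [h0, h1]
    exact ⟨le_refl 1, digit_ge_one hα 0⟩
  | succ n ih =>
    obtain ⟨h1, h2⟩ := ih
    have h3 : 1 ≤ cfDen α (n + 1) := le_trans h1 h2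
    refine ⟨h3, ?_⟩
    show cfDen α (n + 1) ≤ cfDigit α (n + 2) * cfDen α (n + 1) + cfDen α n
    have hd := digit_ge_one hα (n + 1)
    nlinarith

lemma den_ge (n : ℕ) : (n : ℤ) ≤ cfDen α (n + 1) := by
  induction n with
  | zero =>
    show (0 : ℤ) ≤ cfDen α 1
    exact le_trans zero_le_one (le_trans (den_pos hα 0).1 (den_pos hα 0).2)
  | succ n ih =>
    show (n : ℤ) + 1 ≤ cfDigit α (n + 2) * cfDen α (n + 1) + cfDen α n
    have hd := digit_ge_one hα (n + 1)
    have h1 := (den_pos hα n).1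
    have h2 := (den_pos hα (n + 1)).1
    nlinarith

lemma cf_identity : ∀ n, α * (cfDen α (n + 1) * cfTail α (n + 2) + cfDen α n)
    = cfNum α (n + 1) * cfTail α (n + 2) + cfNum α n := by
  intro n
  induction n with
  | zero =>
    have h1 : cfTail α 1 ≠ 0 := ne_of_gt (tail_pos hα 0)
    have h2 : cfTail α 2 ≠ 0 := ne_of_gt (tail_pos hα 1)
    have key : ∀ x a0 a1 T1 T2 : ℝ, T1 ≠ 0 → T2 ≠ 0 → x = a0 + T1⁻¹ → T1 = a1 + T2⁻¹ →
        x * (a1 * T2 + 1) = (a1 * a0 + 1) * T2 + a0 := by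
      intro x a0 a1 T1 T2 hT1 hT2 e0 e1
      subst e1
      subst e0
      have h3 : (a1 * T2 + 1) ≠ 0 := by
        intro h
        apply hT1
        field_simp
        linarith [h]
      field_simp
      ring
    have hk := key α (cfDigit α 0) (cfDigit α 1) (cfTail α 1) (cfTail α 2) h1 h2
      (tail_rec hα 0) (tail_rec hα 1)
    show α * ((cfDigit α 1 : ℝ) * cfTail α 2 + ((1 : ℤ) : ℝ))
        = ((cfDigit α 1 * cfDigit α 0 + 1 : ℤ) : ℝ) * cfTail α 2 + (cfDigit α 0 : ℝ)
    push_cast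
    linear_combination hk
  | succ n ih =>
    have e : cfTail α (n + 2) = (cfDigit α (n + 2) : ℝ) + (cfTail α (n + 3))⁻¹ :=
      tail_rec hα (n + 2)
    have h3 : cfTail α (n + 3) ≠ 0 := ne_of_gt (tail_pos hα (n + 2))
    have hq : (cfDen α (n + 2) : ℝ) = (cfDigit α (n + 2) : ℝ) * cfDen α (n + 1) + cfDen α n := by
      show ((cfDigit α (n + 2) * cfDen α (n + 1) + cfDen α n : ℤ) : ℝ) = _
      push_cast; ring
    have hp : (cfNum α (n + 2) : ℝ) = (cfDigit α (n + 2) : ℝ) * cfNum α (n + 1) + cfNum α n := by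
      show ((cfDigit α (n + 2) * cfNum α (n + 1) + cfNum α n : ℤ) : ℝ) = _
      push_cast; ring
    rw [e] at ih
    rw [hq, hp]
    field_simp at ih
    linear_combination ih

lemma cf_det : ∀ n, cfNum α (n + 1) * cfDen α n - cfNum α n * cfDen α (n + 1) = (-1) ^ n := by
  intro n
  induction n with
  | zero =>
    show (cfDigit α 1 * cfDigit α 0 + 1) * 1 - cfDigit α 0 * cfDigit α 1 = 1
    ring
  | succ n ih =>
    show (cfDigit α (n + 2) * cfNum α (n + 1) + cfNum α n) * cfDen α (n + 1)
        - cfNum α (n + 1) * (cfDigit α (n + 2) * cfDen α (n + 1) + cfDen α n) = (-1) ^ (n + 1)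
    have : (-1 : ℤ) ^ (n + 1) = -(-1) ^ n := by ring
    rw [this, ← ih]; ring

lemma cf_coprime (n : ℕ) : IsCoprime (cfNum α n) (cfDen α n) := by
  cases n with
  | zero => exact isCoprime_one_right
  | succ n =>
    refine ⟨(-1) ^ n * cfDen α n, -((-1) ^ n * cfNum α n), ?_⟩
    have := cf_det hα n
    have hsq : ((-1 : ℤ) ^ n) * ((-1 : ℤ) ^ n) = 1 := by
      rcases Nat.even_or_odd n with h | h
      · rw [h.neg_one_pow]; ring
      · rw [h.neg_one_pow]; ring
    linear_combination ((-1 : ℤ) ^ n) * this + hsq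

lemma cf_abs (n : ℕ) :
    |(cfDen α (n + 1) : ℝ) * α - cfNum α (n + 1)|
      = ((cfDen α (n + 1) : ℝ) * cfTail α (n + 2) + cfDen α n)⁻¹ := by
  have hid := cf_identity hα n
  have hdet := cf_det hα n
  have hden : (0 : ℝ) < (cfDen α (n + 1) : ℝ) * cfTail α (n + 2) + cfDen α n := by
    have h1 := (den_pos hα n).1
    have h2 := (den_pos hα (n + 1)).1
    have h3 := tail_gt_one hα (n + 1)
    have h1' : (1 : ℝ) ≤ (cfDen α n : ℝ) := by exact_mod_cast h1
    have h2' : (1 : ℝ) ≤ (cfDen α (n + 1) : ℝ) := by exact_mod_cast h2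
    nlinarith
  have key : ((cfDen α (n + 1) : ℝ) * α - cfNum α (n + 1))
      * ((cfDen α (n + 1) : ℝ) * cfTail α (n + 2) + cfDen α n) = (-1) ^ (n + 1) := by
    have hdet' : (cfNum α (n + 1) : ℝ) * cfDen α n - cfNum α n * cfDen α (n + 1)
        = (-1 : ℝ) ^ n := by exact_mod_cast congrArg (fun z : ℤ => (z : ℝ)) hdet
    have : ((cfDen α (n + 1) : ℝ) * α - cfNum α (n + 1))
        * ((cfDen α (n + 1) : ℝ) * cfTail α (n + 2) + cfDen α n)
        = (cfDen α (n + 1) : ℝ) * (α * ((cfDen α (n + 1) : ℝ) * cfTail α (n + 2) + cfDen α n))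
          - (cfNum α (n + 1) : ℝ) * ((cfDen α (n + 1) : ℝ) * cfTail α (n + 2) + cfDen α n) := by
      ring
    rw [this, hid]
    linear_combination (-1 : ℝ) * hdet'
  have h4 : |(cfDen α (n + 1) : ℝ) * α - cfNum α (n + 1)|
      * ((cfDen α (n + 1) : ℝ) * cfTail α (n + 2) + cfDen α n) = 1 := by
    rw [← abs_of_pos hden, ← abs_mul, key]
    rcases Nat.even_or_odd (n + 1) with h | h
    · rw [h.neg_one_pow]; norm_num
    · rw [h.neg_one_pow]; norm_num
  rw [inv_eq_one_div, eq_div_iff (ne_of_gt hden)]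
  exact h4

omit hα in
lemma psi2_nonneg (t : ℝ) : 0 ≤ psi2 α t := by
  apply Real.sInf_nonneg
  rintro x ⟨p, q, -, -, -, rfl⟩
  positivity

lemma psi2_bound (j : ℕ) :
    (2 * (cfDen α (j + 1) : ℝ)) * psi2 α (2 * (cfDen α (j + 1) : ℝ))
      ≤ 4 / (cfTail α (j + 2) + (cfDen α j : ℝ) / (cfDen α (j + 1) : ℝ)) := by
  have hq0 : (1 : ℤ) ≤ cfDen α j := (den_pos hα j).1
  have hq1 : (1 : ℤ) ≤ cfDen α (j + 1) := (den_pos hα (j + 1)).1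
  have hq0r : (1 : ℝ) ≤ (cfDen α j : ℝ) := by exact_mod_cast hq0
  have hq1r : (1 : ℝ) ≤ (cfDen α (j + 1) : ℝ) := by exact_mod_cast hq1
  have hT : 1 < cfTail α (j + 2) := tail_gt_one hα (j + 1)
  set t : ℝ := 2 * (cfDen α (j + 1) : ℝ) with ht
  have hmem : 2 * |(cfDen α (j + 1) : ℝ) * α - (cfNum α (j + 1) : ℝ)| ∈
      { x : ℝ | ∃ p q : ℤ, 1 ≤ q ∧ (q : ℝ) ≤ t ∧
        (∀ n : ℕ, (p, q) ≠ (cfNum α n, cfDen α n)) ∧ x = |(q : ℝ) * α - (p : ℝ)| } := by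
    refine ⟨2 * cfNum α (j + 1), 2 * cfDen α (j + 1), by linarith, by push_cast; linarith, ?_, ?_⟩
    · intro n h
      rw [Prod.mk.injEq] at h
      obtain ⟨hp, hq⟩ := h
      obtain ⟨u, v, huv⟩ := cf_coprime hα n
      rw [← hp, ← hq] at huv
      have h2 : (2 : ℤ) ∣ 1 := by
        rw [← huv]
        exact ⟨u * cfNum α (j + 1) + v * cfDen α (j + 1), by ring⟩
      norm_num at h2
    · rw [show ((2 * cfDen α (j + 1) : ℤ) : ℝ) * α - ((2 * cfNum α (j + 1) : ℤ) : ℝ)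
          = 2 * ((cfDen α (j + 1) : ℝ) * α - (cfNum α (j + 1) : ℝ)) by push_cast; ring,
        abs_mul, abs_two]
  have hbdd : BddBelow { x : ℝ | ∃ p q : ℤ, 1 ≤ q ∧ (q : ℝ) ≤ t ∧
      (∀ n : ℕ, (p, q) ≠ (cfNum α n, cfDen α n)) ∧ x = |(q : ℝ) * α - (p : ℝ)| } := by
    refine ⟨0, ?_⟩
    rintro x ⟨p, q, -, -, -, rfl⟩
    positivity
  have hle : psi2 α t ≤ 2 * |(cfDen α (j + 1) : ℝ) * α - (cfNum α (j + 1) : ℝ)| :=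
    csInf_le hbdd hmem
  have habs := cf_abs hα j
  have hden : (0 : ℝ) < (cfDen α (j + 1) : ℝ) * cfTail α (j + 2) + (cfDen α j : ℝ) := by
    nlinarith
  have htpos : 0 < t := by rw [ht]; linarith
  calc t * psi2 α t ≤ t * (2 * |(cfDen α (j + 1) : ℝ) * α - (cfNum α (j + 1) : ℝ)|) := by
        exact mul_le_mul_of_nonneg_left hle (le_of_lt htpos)
    _ = 4 * (cfDen α (j + 1) : ℝ)
        * ((cfDen α (j + 1) : ℝ) * cfTail α (j + 2) + (cfDen α j : ℝ))⁻¹ := by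
        rw [habs, ht]; ring
    _ = 4 / (cfTail α (j + 2) + (cfDen α j : ℝ) / (cfDen α (j + 1) : ℝ)) := by
        rw [eq_div_iff (by positivity)]
        field_simp

lemma tail_eq_one (k : ℕ) (h : cfDigit α (k + 1) = 1) :
    cfTail α (k + 1) = 1 + (cfTail α (k + 2))⁻¹ := by
  have := tail_rec hα (k + 1)
  rw [h] at this
  push_cast at this
  exact this

lemma occ_bound (i : ℕ)
    (h2 : cfDigit α (i + 3) = 1) (h3 : cfDigit α (i + 4) = 1) (h4 : cfDigit α (i + 5) = 3)
    (h5 : cfDigit α (i + 6) = 1) (h6 : cfDigit α (i + 7) = 1) (h7 : cfDigit α (i + 8) = 1)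
    (h8 : cfDigit α (i + 9) = 1) (h9 : cfDigit α (i + 10) = 1) :
    ∃ tt : ℝ, (i : ℝ) ≤ tt ∧
      tt * psi2 α tt ≤ 4 / ((Real.sqrt 21 + 1) / 10 + (Real.sqrt 21 + 943) / 262) := by
  -- square root facts
  set s : ℝ := Real.sqrt 21 with hs
  have hs0 : 0 ≤ s := Real.sqrt_nonneg 21
  have hssq : s ^ 2 = 21 := Real.sq_sqrt (by norm_num)
  have hsup : s ≤ 4.583 := by nlinarith
  set S : ℝ := (s + 1) / 10 + (s + 943) / 262 with hSdef
  have hSpos : 0 < S := by rw [hSdef]; positivity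
  -- tail positivity facts
  have pos : ∀ k : ℕ, 0 < cfTail α (k + 1) := fun k => tail_pos hα k
  have inv_id : ∀ k : ℕ, cfTail α (k + 1) * (cfTail α (k + 1))⁻¹ = 1 :=
    fun k => mul_inv_cancel₀ (ne_of_gt (pos k))
  -- chain of tail bounds: t11 > 1
  have b11 : 1 < cfTail α (i + 11) := tail_gt_one hα (i + 10)
  have e10 : cfTail α (i + 10) = 1 + (cfTail α (i + 11))⁻¹ := tail_eq_one hα (i + 9) h9
  have b10 : 1 < cfTail α (i + 10) ∧ cfTail α (i + 10) < 2 := by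
    constructor <;> rw [e10] <;> nlinarith [inv_id (i + 10), inv_pos.mpr (pos (i + 10)), b11]
  have e9 : cfTail α (i + 9) = 1 + (cfTail α (i + 10))⁻¹ := tail_eq_one hα (i + 8) h8
  have b9 : 3/2 < cfTail α (i + 9) ∧ cfTail α (i + 9) < 2 := by
    constructor <;> rw [e9] <;> nlinarith [inv_id (i + 9), inv_pos.mpr (pos (i + 9)), b10.1, b10.2]
  have e8 : cfTail α (i + 8) = 1 + (cfTail α (i + 9))⁻¹ := tail_eq_one hα (i + 7) h7
  have b8 : 3/2 < cfTail α (i + 8) ∧ cfTail α (i + 8) < 5/3 := by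
    constructor <;> rw [e8] <;> nlinarith [inv_id (i + 8), inv_pos.mpr (pos (i + 8)), b9.1, b9.2]
  have e7 : cfTail α (i + 7) = 1 + (cfTail α (i + 8))⁻¹ := tail_eq_one hα (i + 6) h6
  have b7 : 8/5 < cfTail α (i + 7) ∧ cfTail α (i + 7) < 5/3 := by
    constructor <;> rw [e7] <;> nlinarith [inv_id (i + 7), inv_pos.mpr (pos (i + 7)), b8.1, b8.2]
  have e6 : cfTail α (i + 6) = 1 + (cfTail α (i + 7))⁻¹ := tail_eq_one hα (i + 5) h5
  have b6 : 8/5 < cfTail α (i + 6) ∧ cfTail α (i + 6) < 13/8 := by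
    constructor <;> rw [e6] <;> nlinarith [inv_id (i + 6), inv_pos.mpr (pos (i + 6)), b7.1, b7.2]
  have e5 : cfTail α (i + 5) = 3 + (cfTail α (i + 6))⁻¹ := by
    have := tail_rec hα (i + 5)
    rw [h4] at this
    push_cast at this
    exact this
  have bA' : 47/13 < cfTail α (i + 5) ∧ cfTail α (i + 5) < 29/8 := by
    constructor <;> rw [e5] <;> nlinarith [inv_id (i + 5), inv_pos.mpr (pos (i + 5)), b6.1, b6.2]
  set A : ℝ := cfTail α (i + 5) with hA
  have bA : 47/13 < A ∧ A < 29/8 := bA'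
  have hApos : 0 < A := by linarith [bA.1]
  -- t4 and t3 in terms of A
  have e4 : cfTail α (i + 4) = 1 + A⁻¹ := tail_eq_one hα (i + 3) h3
  have e3 : cfTail α (i + 3) = 1 + (cfTail α (i + 4))⁻¹ := tail_eq_one hα (i + 2) h2
  have ht4pos : (0 : ℝ) < 1 + A⁻¹ := by positivity
  have e3' : (cfTail α (i + 3))⁻¹ = (A + 1) / (2 * A + 1) := by
    have hA1 : (0 : ℝ) < A + 1 := by linarith
    have h2A : (0 : ℝ) < 2 * A + 1 := by linarith
    rw [e3, e4]
    have h1 : (1 : ℝ) + A⁻¹ = (A + 1) / A := by field_simp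
    rw [h1, inv_div]
    have h2 : (1 : ℝ) + A / (A + 1) = (2 * A + 1) / (A + 1) := by
      field_simp
      ring
    rw [h2, inv_div]
  -- b = digit before the pattern
  have hb : (1 : ℝ) ≤ (cfDigit α (i + 2) : ℝ) := by exact_mod_cast digit_ge_one hα (i + 1)
  -- denominators
  have q1 : (1 : ℝ) ≤ (cfDen α (i + 1) : ℝ) := by exact_mod_cast (den_pos hα (i + 1)).1
  have q0 : (1 : ℝ) ≤ (cfDen α i : ℝ) := by exact_mod_cast (den_pos hα i).1
  have q01 : (cfDen α i : ℝ) ≤ (cfDen α (i + 1) : ℝ) := by exact_mod_cast (den_pos hα i).2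
  set w : ℝ := (cfDen α (i + 2) : ℝ) / (cfDen α (i + 1) : ℝ) with hw
  have hrec2 : (cfDen α (i + 2) : ℝ)
      = (cfDigit α (i + 2) : ℝ) * (cfDen α (i + 1) : ℝ) + (cfDen α i : ℝ) := by
    exact_mod_cast congrArg (fun z : ℤ => (z : ℝ))
      (show cfDen α (i + 2) = cfDigit α (i + 2) * cfDen α (i + 1) + cfDen α i from rfl)
  have hwval : w = (cfDigit α (i + 2) : ℝ) + (cfDen α i : ℝ) / (cfDen α (i + 1) : ℝ)  := by
    rw [hw, hrec2]
    field_simp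
  have hrho_pos : 0 < (cfDen α i : ℝ) / (cfDen α (i + 1) : ℝ) := by positivity
  have hrho_le : (cfDen α i : ℝ) / (cfDen α (i + 1) : ℝ) ≤ 1 := by
    rw [div_le_one (by linarith)]; exact q01
  have hwpos : 1 < w := by rw [hwval]; linarith
  -- the two candidate quantities
  -- X = t_{i+2} + q_i/q_{i+1} = w + (A+1)/(2A+1)
  have e2 : cfTail α (i + 2) = (cfDigit α (i + 2) : ℝ) + (cfTail α (i + 3))⁻¹ :=
    tail_rec hα (i + 2)
  have hX : cfTail α (i + 2) + (cfDen α i : ℝ) / (cfDen α (i + 1) : ℝ)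
      = w + (A + 1) / (2 * A + 1) := by
    rw [e2, e3', hwval]; ring
  -- Y = A + (w+1)/(2w+1)
  have hq3 : (cfDen α (i + 3) : ℝ) = (cfDen α (i + 2) : ℝ) + (cfDen α (i + 1) : ℝ) := by
    have : cfDen α (i + 3) = cfDigit α (i + 3) * cfDen α (i + 2) + cfDen α (i + 1) := rfl
    rw [h2, one_mul] at this
    exact_mod_cast congrArg (fun z : ℤ => (z : ℝ)) this
  have hq4 : (cfDen α (i + 4) : ℝ) = (cfDen α (i + 3) : ℝ) + (cfDen α (i + 2) : ℝ) := by
    have : cfDen α (i + 4) = cfDigit α (i + 4) * cfDen α (i + 3) + cfDen α (i + 2) := rfl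
    rw [h3, one_mul] at this
    exact_mod_cast congrArg (fun z : ℤ => (z : ℝ)) this
  have q2 : (1 : ℝ) ≤ (cfDen α (i + 2) : ℝ) := by exact_mod_cast (den_pos hα (i + 2)).1
  have hq1pos : (0 : ℝ) < (cfDen α (i + 1) : ℝ) := by linarith
  have h2w : (0 : ℝ) < 2 * w + 1 := by linarith
  have hq4pos : (0 : ℝ) < (cfDen α (i + 4) : ℝ) := by
    rw [hq4, hq3]; linarith
  have hY : cfTail α (i + 5) + (cfDen α (i + 3) : ℝ) / (cfDen α (i + 4) : ℝ)
      = A + (w + 1) / (2 * w + 1) := by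
    rw [← hA]
    congr 1
    have gen : ∀ x y : ℝ, 0 < y → 0 < x → (x + y) / (x + y + x) = (x / y + 1) / (2 * (x / y) + 1) := by
      intro x y hy hx
      rw [div_eq_div_iff (by positivity) (by positivity)]
      linear_combination div_mul_cancel₀ x hy.ne'
    rw [hq4, hq3, hw]
    exact gen _ _ hq1pos (by linarith)
  rcases le_or_gt w (73 / 20) with hcase | hcase
  · -- use t = 2 q_{i+4}
    have h93 : (93 : ℝ) / 166 ≤ (w + 1) / (2 * w + 1) := by
      rw [div_le_div_iff₀ (by norm_num) h2w]
      linarith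
    have hSle : S ≤ 47 / 13 + 93 / 166 := by
      rw [hSdef]; linarith
    have hYge : S ≤ A + (w + 1) / (2 * w + 1) := by
      linarith [bA.1]
    have hbound := psi2_bound hα (i + 3)
    rw [show i + 3 + 1 = i + 4 from rfl, show i + 3 + 2 = i + 5 from rfl] at hbound
    refine ⟨2 * (cfDen α (i + 4) : ℝ), ?_, ?_⟩
    · have hge : ((i + 3 : ℕ) : ℤ) ≤ cfDen α (i + 4) := den_ge hα (i + 3)
      have : ((i : ℕ) : ℝ) + 3 ≤ (cfDen α (i + 4) : ℝ) := by exact_mod_cast hge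
      linarith
    · refine le_trans hbound ?_
      rw [hY]
      rw [div_le_div_iff₀ (by linarith) hSpos]
      linarith [hYge]
  · -- use t = 2 q_{i+1}
    have h37 : (37 : ℝ) / 66 ≤ (A + 1) / (2 * A + 1) := by
      rw [div_le_div_iff₀ (by norm_num) (by linarith)]
      linarith [bA.2]
    have hSle : S ≤ 73 / 20 + 37 / 66 := by
      rw [hSdef]; linarith
    have hXge : S ≤ w + (A + 1) / (2 * A + 1) := by
      linarith
    have hbound := psi2_bound hα i
    refine ⟨2 * (cfDen α (i + 1) : ℝ), ?_, ?_⟩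
    · have hge : ((i : ℕ) : ℤ) ≤ cfDen α (i + 1) := den_ge hα i
      have : ((i : ℕ) : ℝ) ≤ (cfDen α (i + 1) : ℝ) := by exact_mod_cast hge
      linarith
    · refine le_trans hbound ?_
      rw [hX]
      rw [div_le_div_iff₀ (by linarith) hSpos]
      linarith [hXge]

end CF

/-- If `α` is irrational, not equivalent to `(1+√5)/2`, and contains the pattern
`1, 1, 3, 1, 1, 1, 1, 1` for infinitely many positions, then
`𝔨(α) ≤ 4/((√21+1)/10 + (√21+943)/262)`; in particular `𝔨(α) < 164/(13√173)`. -/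
theorem stmt_17 (α : ℝ) (hα : Irrational α)
    (h5 : ¬ CFEquiv α ((1 + Real.sqrt 5) / 2))
    (hpat : ∃ᶠ n in atTop,
      cfDigit α n = 1 ∧ cfDigit α (n + 1) = 1 ∧ cfDigit α (n + 2) = 3 ∧
      cfDigit α (n + 3) = 1 ∧ cfDigit α (n + 4) = 1 ∧ cfDigit α (n + 5) = 1 ∧
      cfDigit α (n + 6) = 1 ∧ cfDigit α (n + 7) = 1) :
    kConst α ≤ 4 / ((Real.sqrt 21 + 1) / 10 + (Real.sqrt 21 + 943) / 262) ∧
    kConst α < 164 / (13 * Real.sqrt 173) := by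
  have hfreq : ∃ᶠ t in atTop, t * psi2 α t ≤
      4 / ((Real.sqrt 21 + 1) / 10 + (Real.sqrt 21 + 943) / 262) := by
    rw [Filter.frequently_atTop]
    intro a
    obtain ⟨n, hn, hd⟩ := Filter.frequently_atTop.mp hpat (⌈a⌉.toNat + 3)
    obtain ⟨i, rfl⟩ : ∃ i, n = i + 3 := ⟨n - 3, by omega⟩
    obtain ⟨g0, g1, g2, g3, g4, g5, g6, g7⟩ := hd
    obtain ⟨tt, htt, hbb⟩ := occ_bound hα i g0 g1 g2 g3 g4 g5 g6 g7
    refine ⟨tt, ?_, hbb⟩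
    have h1 : a ≤ ((⌈a⌉.toNat : ℤ) : ℝ) := by
      have ha := Int.le_ceil a
      have h2 : (⌈a⌉ : ℝ) ≤ ((⌈a⌉.toNat : ℤ) : ℝ) := by exact_mod_cast Int.self_le_toNat _
      linarith
    have h2 : ((⌈a⌉.toNat : ℤ) : ℝ) ≤ (i : ℝ) := by
      have : (⌈a⌉.toNat : ℕ) ≤ i := by omega
      exact_mod_cast this
    linarith
  have hbdd : Filter.IsBoundedUnder (· ≥ ·) atTop (fun t : ℝ => t * psi2 α t) := by
    refine ⟨0, ?_⟩
    rw [Filter.eventually_map]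
    filter_upwards [Filter.eventually_ge_atTop (0 : ℝ)] with t ht
    exact mul_nonneg ht (psi2_nonneg (α := α) t)
  have hkey : kConst α ≤ 4 / ((Real.sqrt 21 + 1) / 10 + (Real.sqrt 21 + 943) / 262) :=
    Filter.liminf_le_of_frequently_le hfreq hbdd
  refine ⟨hkey, lt_of_le_of_lt hkey ?_⟩
  have hs21 : Real.sqrt 21 ^ 2 = 21 := Real.sq_sqrt (by norm_num)
  have hs21nn : 0 ≤ Real.sqrt 21 := Real.sqrt_nonneg 21
  have h21lo : (4.5825 : ℝ) ≤ Real.sqrt 21 := by nlinarith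
  have h21up : Real.sqrt 21 ≤ (4.583 : ℝ) := by nlinarith
  have hs173 : Real.sqrt 173 ^ 2 = 173 := Real.sq_sqrt (by norm_num)
  have hs173nn : 0 ≤ Real.sqrt 173 := Real.sqrt_nonneg 173
  have h173up : Real.sqrt 173 ≤ (13.1531 : ℝ) := by nlinarith
  have h173lo : (13 : ℝ) ≤ Real.sqrt 173 := by nlinarith
  have hSpos : (0 : ℝ) < (Real.sqrt 21 + 1) / 10 + (Real.sqrt 21 + 943) / 262 := by positivity
  rw [div_lt_div_iff₀ hSpos (by positivity)]
  nlinarith
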